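/- Fix ε ∈ (0, 1/2] and integer d ≥ 1; let n = 2^{d+1} − 2, let f be the tree-connectivity function of the complete rooted binary tree of depth d with L = 2^d leaves, and let the n edge variables be independent with Pr[x_i = 1] = (1+ε)/2. Then there exists a leaf-last non-adaptive strategy S that, among all non-adaptive strategies, minimizes the conditional expected leaf cost given that at least one leaf is alive; and for any such S and every ℓ ∈ {1,…,L−1}, Pr[S first finds an alive leaf on its ℓ-th leaf test | at least one leaf is alive] ≥ Pr[S first finds an alive leaf on its (ℓ+1)-st leaf test | at least one leaf is alive]. -/

import Mathlib

open Finset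

/-- The set of tested indices `T` determines `f` on input `x`:
every input agreeing with `x` on `T` gives the same function value. -/
def Determines (n : ℕ) (f : (Fin n → Bool) → Bool) (T : Finset (Fin n))
    (x : Fin n → Bool) : Prop :=
  ∀ x' : Fin n → Bool, (∀ i ∈ T, x' i = x i) → f x' = f x

/-- The set of indices tested by the non-adaptive strategy `π` in its first `k` tests. -/
def prefixSet (n : ℕ) (π : Equiv.Perm (Fin n)) (k : ℕ) : Finset (Fin n) :=
  Finset.univ.filter (fun i => (π.symm i).val < k)

/-- The number of tests performed by the non-adaptive strategy `π` on input `x`: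
the least `k` such that the first `k` tested indices determine `f` on `x`. -/
noncomputable def naSteps (n : ℕ) (f : (Fin n → Bool) → Bool)
    (π : Equiv.Perm (Fin n)) (x : Fin n → Bool) : ℕ :=
  sInf {k : ℕ | Determines n f (prefixSet n π k) x}

/-- The cost incurred by the non-adaptive strategy `π` on input `x`, with cost vector `c`. -/
noncomputable def naCost (n : ℕ) (f : (Fin n → Bool) → Bool) (c : Fin n → ℝ)
    (π : Equiv.Perm (Fin n)) (x : Fin n → Bool) : ℝ :=
  ∑ i ∈ prefixSet n π (naSteps n f π x), c i

/-- Probability of the outcome `x` under the product distribution with parameters `p`. -/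
def prodWeight (n : ℕ) (p : Fin n → ℝ) (x : Fin n → Bool) : ℝ :=
  ∏ i : Fin n, if x i then p i else 1 - p i

/-- Expected cost of the non-adaptive strategy `π`. -/
noncomputable def naExpCost (n : ℕ) (f : (Fin n → Bool) → Bool) (c : Fin n → ℝ)
    (p : Fin n → ℝ) (π : Equiv.Perm (Fin n)) : ℝ :=
  ∑ x : Fin n → Bool, prodWeight n p x * naCost n f c π x

/-- Optimal expected cost among non-adaptive strategies. -/
noncomputable def OPTN (n : ℕ) (f : (Fin n → Bool) → Bool) (c : Fin n → ℝ)
    (p : Fin n → ℝ) : ℝ :=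
  sInf { r : ℝ | ∃ π : Equiv.Perm (Fin n), r = naExpCost n f c p π }

/-- Binary decision trees over `n` variables (adaptive strategies). -/
inductive DecTree (n : ℕ) : Type
  | leaf : Bool → DecTree n
  | node : Fin n → DecTree n → DecTree n → DecTree n

/-- Evaluation of a decision tree on an input. -/
def DecTree.eval {n : ℕ} : DecTree n → (Fin n → Bool) → Bool
  | .leaf b, _ => b
  | .node i t0 t1, x => if x i then DecTree.eval t1 x else DecTree.eval t0 x

/-- Cost of a decision tree on input `x`: the sum of the costs of the indices
labeling the internal nodes on the root-to-leaf path followed on `x`. -/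
def DecTree.costOn {n : ℕ} (c : Fin n → ℝ) : DecTree n → (Fin n → Bool) → ℝ
  | .leaf _, _ => 0
  | .node i t0 t1, x =>
      c i + (if x i then DecTree.costOn c t1 x else DecTree.costOn c t0 x)

/-- The decision tree `t` computes the function `f`. -/
def DecTree.Computes {n : ℕ} (t : DecTree n) (f : (Fin n → Bool) → Bool) : Prop :=
  ∀ x, t.eval x = f x

/-- Expected cost of an adaptive strategy (decision tree). -/
noncomputable def adExpCost (n : ℕ) (c : Fin n → ℝ) (p : Fin n → ℝ)
    (t : DecTree n) : ℝ :=
  ∑ x : Fin n → Bool, prodWeight n p x * DecTree.costOn c t x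

/-- Optimal expected cost among adaptive strategies computing `f`. -/
noncomputable def OPTA (n : ℕ) (f : (Fin n → Bool) → Bool) (c : Fin n → ℝ)
    (p : Fin n → ℝ) : ℝ :=
  sInf { r : ℝ | ∃ t : DecTree n, DecTree.Computes t f ∧ r = adExpCost n c p t }

/-- `f` is the monotone read-once DNF whose terms are the (nonempty, pairwise disjoint)
sets of variables `T 0, …, T (m-1)`. -/
def IsReadOnceDNF (n m : ℕ) (T : Fin m → Finset (Fin n))
    (f : (Fin n → Bool) → Bool) : Prop :=
  (∀ j, (T j).Nonempty) ∧
  (∀ j k, j ≠ k → Disjoint (T j) (T k)) ∧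
  (∀ x, f x = true ↔ ∃ j, ∀ i ∈ T j, x i = true)

/-- Nodes of the complete rooted binary tree of depth `d` are numbered `1, …, 2^(d+1)-1`,
with root `1` and the children of `v` being `2v` and `2v+1`; the edge joining a non-root
node `v` to its parent `v/2` is identified with the variable index `v - 2 ∈ Fin (2^(d+1)-2)`.
`edgeVal d x v` is the value of the edge above node `v`. -/
def edgeVal (d : ℕ) (x : Fin (2 ^ (d + 1) - 2) → Bool) (v : ℕ) : Bool :=
  if h : v - 2 < 2 ^ (d + 1) - 2 then x ⟨v - 2, h⟩ else false

/-- The leaf at node `v` (where `2^d ≤ v < 2^(d+1)`) is alive: every edge on the path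
from the root to `v` has value `1`. -/
def leafAlive (d : ℕ) (x : Fin (2 ^ (d + 1) - 2) → Bool) (v : ℕ) : Bool :=
  decide (∀ j ∈ Finset.range d, edgeVal d x (v / 2 ^ j) = true)

/-- The tree-connectivity function of the complete rooted binary tree of depth `d`:
true iff at least one leaf is alive. -/
def treeConn (d : ℕ) (x : Fin (2 ^ (d + 1) - 2) → Bool) : Bool :=
  decide (∃ v ∈ Finset.Ico ((2 : ℕ) ^ d) ((2 : ℕ) ^ (d + 1)), leafAlive d x v = true)

/-- The leaf edges of the tree: edges whose lower endpoint `i + 2` is a leaf node. -/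
def leafEdges (d : ℕ) : Finset (Fin (2 ^ (d + 1) - 2)) :=
  Finset.univ.filter (fun i => (2 : ℕ) ^ d ≤ (i : ℕ) + 2)

/-- A non-adaptive strategy is leaf-last if every internal edge precedes every leaf edge
in its testing order. -/
def IsLeafLast (d : ℕ) (π : Equiv.Perm (Fin (2 ^ (d + 1) - 2))) : Prop :=
  ∀ i j : Fin (2 ^ (d + 1) - 2),
    i ∉ leafEdges d → j ∈ leafEdges d → (π.symm i).val < (π.symm j).val

/-- The leaf cost of non-adaptive strategy `π` on input `x`: the number of leaf edges it
tests before stopping (tests on internal edges are free). -/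
noncomputable def leafCost (d : ℕ) (π : Equiv.Perm (Fin (2 ^ (d + 1) - 2)))
    (x : Fin (2 ^ (d + 1) - 2) → Bool) : ℕ :=
  ((prefixSet (2 ^ (d + 1) - 2) π (naSteps (2 ^ (d + 1) - 2) (treeConn d) π x)) ∩
    leafEdges d).card

/-- The conditional expectation of the leaf cost of `π`, given that at least one leaf is
alive, when the edges are independently alive with probability `(1+ε)/2`. -/
noncomputable def condExpLeafCost (d : ℕ) (ε : ℝ)
    (π : Equiv.Perm (Fin (2 ^ (d + 1) - 2))) : ℝ :=
  (∑ x : Fin (2 ^ (d + 1) - 2) → Bool,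
      prodWeight (2 ^ (d + 1) - 2) (fun _ => (1 + ε) / 2) x *
        (if treeConn d x then (leafCost d π x : ℝ) else 0)) /
  (∑ x : Fin (2 ^ (d + 1) - 2) → Bool,
      prodWeight (2 ^ (d + 1) - 2) (fun _ => (1 + ε) / 2) x *
        (if treeConn d x then 1 else 0))

/-- `π` first finds an alive leaf on its `l`-th leaf test on input `x`: the leaf incident
to the `l`-th leaf edge in the testing order of `π` is alive, and no leaf incident to an
earlier leaf edge in the order is alive. -/
def firstAliveAt (d : ℕ) (π : Equiv.Perm (Fin (2 ^ (d + 1) - 2))) (l : ℕ)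
    (x : Fin (2 ^ (d + 1) - 2) → Bool) : Bool :=
  decide (∃ i ∈ leafEdges d,
    ((leafEdges d).filter (fun j => (π.symm j).val < (π.symm i).val)).card = l - 1 ∧
    leafAlive d x ((i : ℕ) + 2) = true ∧
    ∀ j ∈ leafEdges d, (π.symm j).val < (π.symm i).val →
      leafAlive d x ((j : ℕ) + 2) = false)

/-- The conditional probability, given that at least one leaf is alive, that `π` first
finds an alive leaf on its `l`-th leaf test. -/
noncomputable def condProbFirstAliveAt (d : ℕ) (ε : ℝ)
    (π : Equiv.Perm (Fin (2 ^ (d + 1) - 2))) (l : ℕ) : ℝ :=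
  (∑ x : Fin (2 ^ (d + 1) - 2) → Bool,
      prodWeight (2 ^ (d + 1) - 2) (fun _ => (1 + ε) / 2) x *
        (if treeConn d x ∧ firstAliveAt d π l x then 1 else 0)) /
  (∑ x : Fin (2 ^ (d + 1) - 2) → Bool,
      prodWeight (2 ^ (d + 1) - 2) (fun _ => (1 + ε) / 2) x *
        (if treeConn d x then 1 else 0))


section Aux

/-! ### Generic lemmas about `Determines`, `prefixSet`, `naSteps` -/

lemma det_mono {n : ℕ} {f : (Fin n → Bool) → Bool} {T T' : Finset (Fin n)}
    {x : Fin n → Bool} (h : Determines n f T x) (hTT : T ⊆ T') :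
    Determines n f T' x := fun x' hx' => h x' (fun i hi => hx' i (hTT hi))

lemma prefixSet_mono {n : ℕ} (π : Equiv.Perm (Fin n)) {k k' : ℕ} (h : k ≤ k') :
    prefixSet n π k ⊆ prefixSet n π k' := by
  intro i hi
  simp only [prefixSet, Finset.mem_filter, Finset.mem_univ, true_and] at *
  omega

lemma mem_prefixSet {n : ℕ} (π : Equiv.Perm (Fin n)) {k : ℕ} {i : Fin n} :
    i ∈ prefixSet n π k ↔ (π.symm i).val < k := by
  simp [prefixSet]

lemma det_univ {n : ℕ} (f : (Fin n → Bool) → Bool) (x : Fin n → Bool) :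
    Determines n f Finset.univ x := by
  intro x' hx'
  have : x' = x := funext fun i => hx' i (Finset.mem_univ i)
  rw [this]

lemma prefixSet_top {n : ℕ} (π : Equiv.Perm (Fin n)) :
    prefixSet n π n = Finset.univ := by
  ext i; simp [prefixSet, (π.symm i).isLt]

lemma naSteps_set_nonempty {n : ℕ} (f : (Fin n → Bool) → Bool)
    (π : Equiv.Perm (Fin n)) (x : Fin n → Bool) :
    {k : ℕ | Determines n f (prefixSet n π k) x}.Nonempty :=
  ⟨n, by rw [Set.mem_setOf_eq, prefixSet_top]; exact det_univ f x⟩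

lemma det_naSteps {n : ℕ} (f : (Fin n → Bool) → Bool)
    (π : Equiv.Perm (Fin n)) (x : Fin n → Bool) :
    Determines n f (prefixSet n π (naSteps n f π x)) x :=
  Nat.sInf_mem (naSteps_set_nonempty f π x)

lemma naSteps_le {n : ℕ} {f : (Fin n → Bool) → Bool}
    {π : Equiv.Perm (Fin n)} {x : Fin n → Bool} {k : ℕ}
    (h : Determines n f (prefixSet n π k) x) : naSteps n f π x ≤ k :=
  Nat.sInf_le h

lemma naSteps_le_n {n : ℕ} (f : (Fin n → Bool) → Bool)
    (π : Equiv.Perm (Fin n)) (x : Fin n → Bool) : naSteps n f π x ≤ n :=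
  naSteps_le (by rw [prefixSet_top]; exact det_univ f x)

lemma det_of_naSteps_le {n : ℕ} {f : (Fin n → Bool) → Bool}
    {π : Equiv.Perm (Fin n)} {x : Fin n → Bool} {k : ℕ}
    (h : naSteps n f π x ≤ k) : Determines n f (prefixSet n π k) x :=
  det_mono (det_naSteps f π x) (prefixSet_mono π h)

lemma lt_naSteps_of_not_det {n : ℕ} {f : (Fin n → Bool) → Bool}
    {π : Equiv.Perm (Fin n)} {x : Fin n → Bool} {k : ℕ}
    (h : ¬ Determines n f (prefixSet n π k) x) : k < naSteps n f π x :=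
  lt_of_not_ge fun hle => h (det_of_naSteps_le hle)

lemma naSteps_congr {n : ℕ} {f : (Fin n → Bool) → Bool}
    {π π' : Equiv.Perm (Fin n)} {x : Fin n → Bool}
    (h : ∀ k, Determines n f (prefixSet n π k) x ↔ Determines n f (prefixSet n π' k) x) :
    naSteps n f π x = naSteps n f π' x := by
  unfold naSteps
  congr 1
  ext k
  exact h k

lemma card_filter_val_lt (n c : ℕ) (hc : c ≤ n) :
    (Finset.univ.filter (fun i : Fin n => i.val < c)).card = c := by
  have : Finset.univ.filter (fun i : Fin n => i.val < c)
      = Finset.map (Fin.castLEEmb hc) Finset.univ := by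
    ext i
    simp only [Finset.mem_filter, Finset.mem_univ, true_and, Finset.mem_map]
    constructor
    · intro hi
      exact ⟨⟨i.val, hi⟩, rfl⟩
    · rintro ⟨a, rfl⟩; exact a.isLt
  rw [this, Finset.card_map, Finset.card_univ, Fintype.card_fin]

lemma card_prefixSet {n : ℕ} (π : Equiv.Perm (Fin n)) {k : ℕ} (hk : k ≤ n) :
    (prefixSet n π k).card = k := by
  have himg : prefixSet n π k
      = (Finset.univ.filter (fun i : Fin n => i.val < k)).image π := by
    ext i
    simp only [prefixSet, Finset.mem_filter, Finset.mem_univ, true_and, Finset.mem_image]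
    constructor
    · intro hi; exact ⟨π.symm i, hi, π.apply_symm_apply i⟩
    · rintro ⟨a, ha, rfl⟩; rwa [π.symm_apply_apply]
  rw [himg, Finset.card_image_of_injective _ π.injective, card_filter_val_lt n k hk]

end Aux


section Tree

variable {d : ℕ}

lemma mem_leafEdges {e : Fin (2 ^ (d + 1) - 2)} :
    e ∈ leafEdges d ↔ 2 ^ d - 2 ≤ e.val := by
  have h2 : 1 ≤ 2 ^ d := Nat.one_le_two_pow
  simp only [leafEdges, Finset.mem_filter, Finset.mem_univ, true_and]
  omega

lemma pow_succ_sub (hd : 1 ≤ d) : 2 ^ (d + 1) - 2 = 2 ^ d + (2 ^ d - 2) := by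
  have h2 : 2 ≤ 2 ^ d := Nat.one_lt_two_pow_iff.mpr (by omega)
  have : 2 ^ (d + 1) = 2 ^ d * 2 := pow_succ 2 d
  omega

lemma path_node_lb {v j : ℕ} (hv1 : 2 ^ d ≤ v) (hj : j ≤ d) :
    2 ^ (d - j) ≤ v / 2 ^ j := by
  have := Nat.div_le_div_right (c := 2 ^ j) hv1
  rwa [Nat.pow_div hj (by norm_num)] at this

lemma path_node_ub {v j : ℕ} (hv2 : v < 2 ^ (d + 1)) (hj : j ≤ d) :
    v / 2 ^ j < 2 ^ (d + 1 - j) := by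
  rw [Nat.div_lt_iff_lt_mul (Nat.two_pow_pos j)]
  calc v < 2 ^ (d + 1) := hv2
    _ = 2 ^ (d + 1 - j) * 2 ^ j := by rw [← pow_add]; congr 1; omega

/-- The edges along the path are all valid indices, and all but the leaf edge internal. -/
lemma edgeVal_path_agree (hd : 1 ≤ d) {x x' : Fin (2 ^ (d + 1) - 2) → Bool} {v : ℕ}
    (hv1 : 2 ^ d ≤ v) (hv2 : v < 2 ^ (d + 1))
    (hagree : ∀ e : Fin (2 ^ (d + 1) - 2),
      (e.val < 2 ^ d - 2 ∨ e.val = v - 2) → x' e = x e) :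
    ∀ j ∈ Finset.range d, edgeVal d x' (v / 2 ^ j) = edgeVal d x (v / 2 ^ j) := by
  intro j hj
  rw [Finset.mem_range] at hj
  have hjd : j ≤ d := le_of_lt hj
  have hlb : 2 ^ (d - j) ≤ v / 2 ^ j := path_node_lb hv1 hjd
  have hub : v / 2 ^ j < 2 ^ (d + 1 - j) := path_node_ub hv2 hjd
  rcases Nat.eq_zero_or_pos j with hj0 | hjpos
  · subst hj0
    simp only [pow_zero, Nat.div_one]
    unfold edgeVal
    by_cases h : v - 2 < 2 ^ (d + 1) - 2
    · rw [dif_pos h, dif_pos h]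
      exact hagree ⟨v - 2, h⟩ (Or.inr rfl)
    · rw [dif_neg h, dif_neg h]
  · -- internal edge
    have h1 : 2 ≤ 2 ^ (d - j) := by
      have : 1 ≤ d - j := by omega
      calc 2 = 2 ^ 1 := rfl
        _ ≤ 2 ^ (d - j) := Nat.pow_le_pow_right (by norm_num) this
    have h2 : 2 ^ (d + 1 - j) ≤ 2 ^ d := Nat.pow_le_pow_right (by norm_num) (by omega)
    have hlt : v / 2 ^ j - 2 < 2 ^ d - 2 := by omega
    have hltn : v / 2 ^ j - 2 < 2 ^ (d + 1) - 2 := by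
      have := pow_succ_sub hd
      omega
    unfold edgeVal
    rw [dif_pos hltn, dif_pos hltn]
    exact hagree ⟨v / 2 ^ j - 2, hltn⟩ (Or.inl hlt)

lemma leafAlive_agree (hd : 1 ≤ d) {x x' : Fin (2 ^ (d + 1) - 2) → Bool} {v : ℕ}
    (hv1 : 2 ^ d ≤ v) (hv2 : v < 2 ^ (d + 1))
    (hagree : ∀ e : Fin (2 ^ (d + 1) - 2),
      (e.val < 2 ^ d - 2 ∨ e.val = v - 2) → x' e = x e) :
    leafAlive d x' v = leafAlive d x v := by
  unfold leafAlive
  have := edgeVal_path_agree hd hv1 hv2 hagree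
  apply decide_eq_decide.mpr
  constructor
  · intro h j hj; rw [← this j hj]; exact h j hj
  · intro h j hj; rw [this j hj]; exact h j hj

lemma conn_of_alive (hd : 1 ≤ d) {x : Fin (2 ^ (d + 1) - 2) → Bool}
    {e : Fin (2 ^ (d + 1) - 2)} (heL : e ∈ leafEdges d)
    (ha : leafAlive d x (e.val + 2) = true) : treeConn d x = true := by
  have h2 : 1 ≤ 2 ^ d := Nat.one_le_two_pow
  have hp := pow_succ_sub hd
  have he2 : 2 ^ d ≤ e.val + 2 := by
    have := mem_leafEdges.mp heL; omega
  have he3 : e.val + 2 < 2 ^ (d + 1) := by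
    have := e.isLt; omega
  unfold treeConn
  rw [decide_eq_true_iff]
  exact ⟨e.val + 2, Finset.mem_Ico.mpr ⟨he2, he3⟩, ha⟩

lemma det_of_alive (hd : 1 ≤ d) {T : Finset (Fin (2 ^ (d + 1) - 2))}
    {x : Fin (2 ^ (d + 1) - 2) → Bool}
    (hint : ∀ e : Fin (2 ^ (d + 1) - 2), e.val < 2 ^ d - 2 → e ∈ T)
    {e : Fin (2 ^ (d + 1) - 2)} (heT : e ∈ T) (heL : e ∈ leafEdges d)
    (ha : leafAlive d x (e.val + 2) = true) :
    Determines (2 ^ (d + 1) - 2) (treeConn d) T x := by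
  have h2 : 1 ≤ 2 ^ d := Nat.one_le_two_pow
  have he2 : 2 ^ d ≤ e.val + 2 := by
    have := mem_leafEdges.mp heL; omega
  have he3 : e.val + 2 < 2 ^ (d + 1) := by
    have := e.isLt; have := pow_succ_sub hd; omega
  intro x' hx'
  have hagree : ∀ e' : Fin (2 ^ (d + 1) - 2),
      (e'.val < 2 ^ d - 2 ∨ e'.val = (e.val + 2) - 2) → x' e' = x e' := by
    intro e' h
    rcases h with h | h
    · exact hx' e' (hint e' h)
    · have : e' = e := Fin.ext (by omega)
      rw [this]; exact hx' e heT
  have halive' : leafAlive d x' (e.val + 2) = true := by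
    rw [leafAlive_agree hd he2 he3 hagree]; exact ha
  rw [conn_of_alive hd heL halive', conn_of_alive hd heL ha]

lemma alive_of_det (hd : 1 ≤ d) {T : Finset (Fin (2 ^ (d + 1) - 2))}
    {x : Fin (2 ^ (d + 1) - 2) → Bool}
    (hconn : treeConn d x = true)
    (hdet : Determines (2 ^ (d + 1) - 2) (treeConn d) T x) :
    ∃ e ∈ T, e ∈ leafEdges d ∧ leafAlive d x (e.val + 2) = true := by
  classical
  have h2 : 1 ≤ 2 ^ d := Nat.one_le_two_pow
  have hp := pow_succ_sub hd
  set x' : Fin (2 ^ (d + 1) - 2) → Bool := fun e => if e ∈ T then x e else false with hx'def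
  have hagree : ∀ i ∈ T, x' i = x i := by intro i hi; simp [hx'def, hi]
  have hconn' : treeConn d x' = true := by rw [hdet x' hagree]; exact hconn
  unfold treeConn at hconn'
  rw [decide_eq_true_iff] at hconn'
  obtain ⟨v, hv, halive⟩ := hconn'
  rw [Finset.mem_Ico] at hv
  unfold leafAlive at halive
  rw [decide_eq_true_iff] at halive
  -- each edge along the path is in T and alive under x
  have hedge : ∀ j ∈ Finset.range d, ∃ h : v / 2 ^ j - 2 < 2 ^ (d + 1) - 2,
      (⟨v / 2 ^ j - 2, h⟩ : Fin (2 ^ (d + 1) - 2)) ∈ T ∧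
      x ⟨v / 2 ^ j - 2, h⟩ = true := by
    intro j hj
    have := halive j hj
    unfold edgeVal at this
    split at this
    · next h =>
      refine ⟨h, ?_⟩
      by_cases hT : (⟨v / 2 ^ j - 2, h⟩ : Fin (2 ^ (d + 1) - 2)) ∈ T
      · refine ⟨hT, ?_⟩
        simpa [hx'def, hT] using this
      · exfalso; simp [hx'def, hT] at this
    · exact absurd this (by simp)
  have hd0 : 0 ∈ Finset.range d := Finset.mem_range.mpr hd
  obtain ⟨h0, hT0, hx0⟩ := hedge 0 hd0
  simp only [pow_zero, Nat.div_one] at h0 hT0 hx0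
  refine ⟨⟨v - 2, h0⟩, hT0, ?_, ?_⟩
  · rw [mem_leafEdges]; simp; omega
  · -- leafAlive d x v with v = e.val + 2
    have hv2 : (v - 2) + 2 = v := by omega
    unfold leafAlive
    rw [decide_eq_true_iff]
    intro j hj
    obtain ⟨h, hT, hx⟩ := hedge j hj
    unfold edgeVal
    simp only [hv2]
    rw [dif_pos h]
    exact hx

lemma treeConn_allTrue (hd : 1 ≤ d) : treeConn d (fun _ => true) = true := by
  have h2 : 1 ≤ 2 ^ d := Nat.one_le_two_pow
  have hp := pow_succ_sub hd
  unfold treeConn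
  rw [decide_eq_true_iff]
  refine ⟨2 ^ d, Finset.mem_Ico.mpr ⟨le_refl _, ?_⟩, ?_⟩
  · have : 2 ^ (d + 1) = 2 ^ d * 2 := pow_succ 2 d
    omega
  · unfold leafAlive
    rw [decide_eq_true_iff]
    intro j hj
    rw [Finset.mem_range] at hj
    have hjd : j ≤ d := le_of_lt hj
    have hlb : 2 ^ (d - j) ≤ 2 ^ d / 2 ^ j := path_node_lb (le_refl _) hjd
    have hub : 2 ^ d / 2 ^ j < 2 ^ (d + 1 - j) := path_node_ub (by
      have : 2 ^ (d + 1) = 2 ^ d * 2 := pow_succ 2 d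
      omega) hjd
    have h1 : 2 ^ (d + 1 - j) ≤ 2 ^ (d + 1) := Nat.pow_le_pow_right (by norm_num) (by omega)
    unfold edgeVal
    rw [dif_pos (by omega)]

lemma card_leafEdges (hd : 1 ≤ d) : (leafEdges d).card = 2 ^ d := by
  have h2 : 2 ≤ 2 ^ d := Nat.one_lt_two_pow_iff.mpr (by omega)
  have hp := pow_succ_sub hd
  have hset : leafEdges d = Finset.univ \
      Finset.univ.filter (fun i : Fin (2 ^ (d + 1) - 2) => i.val < 2 ^ d - 2) := by
    ext i
    simp only [leafEdges, Finset.mem_filter, Finset.mem_univ, true_and, Finset.mem_sdiff,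
      not_lt]
    omega
  rw [hset, Finset.card_sdiff_of_subset (Finset.filter_subset _ _),
    card_filter_val_lt _ _ (by omega), Finset.card_univ, Fintype.card_fin]
  omega

end Tree


section LeafLast

variable {d : ℕ} {π : Equiv.Perm (Fin (2 ^ (d + 1) - 2))}

/-- For a leaf-last strategy, every internal edge is among the first `2^d - 2` tests. -/
lemma internal_pos_lt (hd : 1 ≤ d) (hLL : IsLeafLast d π)
    {e : Fin (2 ^ (d + 1) - 2)} (he : e ∉ leafEdges d) :
    (π.symm e).val < 2 ^ d - 2 := by
  have h2 : 2 ≤ 2 ^ d := Nat.one_lt_two_pow_iff.mpr (by omega)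
  have hp := pow_succ_sub hd
  set p := (π.symm e).val with hp2
  have hsub : (leafEdges d).image (fun j => (π.symm j).val)
      ⊆ Finset.Ico (p + 1) (2 ^ (d + 1) - 2) := by
    intro q hq
    rw [Finset.mem_image] at hq
    obtain ⟨j, hj, rfl⟩ := hq
    rw [Finset.mem_Ico]
    exact ⟨hLL e j he hj, (π.symm j).isLt⟩
  have hcard : (leafEdges d).card ≤ (2 ^ (d + 1) - 2) - (p + 1) := by
    calc (leafEdges d).card
        = ((leafEdges d).image (fun j => (π.symm j).val)).card := by
          rw [Finset.card_image_of_injective _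
            (fun a b hab => π.symm.injective (Fin.ext hab))]
      _ ≤ (Finset.Ico (p + 1) (2 ^ (d + 1) - 2)).card := Finset.card_le_card hsub
      _ = (2 ^ (d + 1) - 2) - (p + 1) := Nat.card_Ico _ _
  rw [card_leafEdges hd] at hcard
  have := e.isLt
  omega

/-- For a leaf-last strategy, every leaf edge is tested after the first `2^d - 2` tests. -/
lemma leaf_pos_ge (hd : 1 ≤ d) (hLL : IsLeafLast d π)
    {e : Fin (2 ^ (d + 1) - 2)} (he : e ∈ leafEdges d) :
    2 ^ d - 2 ≤ (π.symm e).val := by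
  have h2 : 2 ≤ 2 ^ d := Nat.one_lt_two_pow_iff.mpr (by omega)
  have hp := pow_succ_sub hd
  set p := (π.symm e).val with hp2
  have hsub : (Finset.univ.filter (fun i : Fin (2 ^ (d + 1) - 2) => i.val < 2 ^ d - 2)).image
      (fun j => (π.symm j).val) ⊆ Finset.range p := by
    intro q hq
    rw [Finset.mem_image] at hq
    obtain ⟨j, hj, rfl⟩ := hq
    rw [Finset.mem_filter] at hj
    rw [Finset.mem_range]
    refine hLL j e ?_ he
    rw [mem_leafEdges]
    omega
  have hcard := (Finset.card_le_card hsub).trans_eq (Finset.card_range p)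
  rw [Finset.card_image_of_injective _
    (fun a b hab => π.symm.injective (Fin.ext hab)), card_filter_val_lt _ _ (by omega)] at hcard
  exact hcard

lemma internal_mem_prefix (hd : 1 ≤ d) (hLL : IsLeafLast d π) {k : ℕ}
    (hk : 2 ^ d - 2 ≤ k) {e : Fin (2 ^ (d + 1) - 2)} (he : e.val < 2 ^ d - 2) :
    e ∈ prefixSet (2 ^ (d + 1) - 2) π k := by
  rw [mem_prefixSet]
  have : e ∉ leafEdges d := by rw [mem_leafEdges]; omega
  have := internal_pos_lt hd hLL this
  omega

lemma card_prefix_inter_leaf (hd : 1 ≤ d) (hLL : IsLeafLast d π) {k : ℕ}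
    (hI : 2 ^ d - 2 ≤ k) (hk : k ≤ 2 ^ (d + 1) - 2) :
    ((prefixSet (2 ^ (d + 1) - 2) π k) ∩ leafEdges d).card = k - (2 ^ d - 2) := by
  classical
  have h2 : 2 ≤ 2 ^ d := Nat.one_lt_two_pow_iff.mpr (by omega)
  have hp := pow_succ_sub hd
  set P := prefixSet (2 ^ (d + 1) - 2) π k with hP
  have hsplit : (P.filter (fun i => i ∈ leafEdges d)).card
      + (P.filter (fun i => i ∉ leafEdges d)).card = P.card :=
    Finset.card_filter_add_card_filter_not (fun i => i ∈ leafEdges d)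
  have h1 : P.filter (fun i => i ∈ leafEdges d) = P ∩ leafEdges d := by
    ext i; simp [Finset.mem_filter, Finset.mem_inter]
  have h2' : P.filter (fun i => i ∉ leafEdges d)
      = Finset.univ.filter (fun i : Fin (2 ^ (d + 1) - 2) => i.val < 2 ^ d - 2) := by
    ext i
    simp only [Finset.mem_filter, Finset.mem_univ, true_and, mem_leafEdges, not_le]
    constructor
    · rintro ⟨-, h⟩; exact h
    · intro h; exact ⟨internal_mem_prefix hd hLL hI h, h⟩
  rw [h1, h2'] at hsplit
  rw [card_filter_val_lt _ _ (by omega), card_prefixSet π hk] at hsplit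
  omega

/-- Characterization of determination for a leaf-last strategy on a connected input. -/
lemma det_iff_alive (hd : 1 ≤ d) (hLL : IsLeafLast d π)
    {x : Fin (2 ^ (d + 1) - 2) → Bool} (hconn : treeConn d x = true)
    {k : ℕ} (hI : 2 ^ d - 2 ≤ k) :
    Determines (2 ^ (d + 1) - 2) (treeConn d) (prefixSet (2 ^ (d + 1) - 2) π k) x ↔
      ∃ e ∈ leafEdges d, (π.symm e).val < k ∧ leafAlive d x (e.val + 2) = true := by
  constructor
  · intro hdet
    obtain ⟨e, heP, heL, ha⟩ := alive_of_det hd hconn hdet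
    exact ⟨e, heL, (mem_prefixSet π).mp heP, ha⟩
  · rintro ⟨e, heL, hek, ha⟩
    exact det_of_alive hd (fun e' he' => internal_mem_prefix hd hLL hI he')
      ((mem_prefixSet π).mpr hek) heL ha

/-- For a leaf-last strategy on a connected input, the number of steps exceeds the
number of internal edges, and the leaf cost is the number of extra steps. -/
lemma leafCost_eq_steps (hd : 1 ≤ d) (hLL : IsLeafLast d π)
    {x : Fin (2 ^ (d + 1) - 2) → Bool} (hconn : treeConn d x = true) :
    2 ^ d - 2 < naSteps (2 ^ (d + 1) - 2) (treeConn d) π x ∧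
    leafCost d π x = naSteps (2 ^ (d + 1) - 2) (treeConn d) π x - (2 ^ d - 2) := by
  set s := naSteps (2 ^ (d + 1) - 2) (treeConn d) π x with hs
  have hsn : s ≤ 2 ^ (d + 1) - 2 := naSteps_le_n _ _ _
  have hdet := det_naSteps (treeConn d) π x
  obtain ⟨e, heP, heL, ha⟩ := alive_of_det hd hconn hdet
  have h1 : 2 ^ d - 2 ≤ (π.symm e).val := leaf_pos_ge hd hLL heL
  have h2 : (π.symm e).val < s := (mem_prefixSet π).mp heP
  have hIs : 2 ^ d - 2 < s := by omega
  exact ⟨hIs, by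
    unfold leafCost
    rw [← hs, card_prefix_inter_leaf hd hLL (by omega) hsn]⟩

/-- Pinning down `naSteps` from first-alive data, for leaf-last strategies. -/
lemma naSteps_eq_of (hd : 1 ≤ d) (hLL : IsLeafLast d π)
    {x : Fin (2 ^ (d + 1) - 2) → Bool} (hconn : treeConn d x = true)
    {m : ℕ} (hI : 2 ^ d - 2 ≤ m)
    (hdet : ∃ e ∈ leafEdges d, (π.symm e).val < m + 1 ∧ leafAlive d x (e.val + 2) = true)
    (hnot : ¬ ∃ e ∈ leafEdges d, (π.symm e).val < m ∧ leafAlive d x (e.val + 2) = true) :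
    naSteps (2 ^ (d + 1) - 2) (treeConn d) π x = m + 1 := by
  have hle : naSteps (2 ^ (d + 1) - 2) (treeConn d) π x ≤ m + 1 :=
    naSteps_le ((det_iff_alive hd hLL hconn (by omega)).mpr hdet)
  have hgt : m < naSteps (2 ^ (d + 1) - 2) (treeConn d) π x :=
    lt_naSteps_of_not_det (fun h => hnot ((det_iff_alive hd hLL hconn hI).mp h))
  omega

end LeafLast


section Sorting

variable {d : ℕ}

/-- Sort key: internal edges first, then leaf edges, each block in the order of `π`. -/
def skey (d : ℕ) (π : Equiv.Perm (Fin (2 ^ (d + 1) - 2)))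
    (e : Fin (2 ^ (d + 1) - 2)) : ℕ :=
  (if e ∈ leafEdges d then 2 ^ (d + 1) - 2 else 0) + (π.symm e).val

lemma skey_inj (π : Equiv.Perm (Fin (2 ^ (d + 1) - 2))) :
    Function.Injective (skey d π) := by
  intro a b hab
  unfold skey at hab
  have ha := (π.symm a).isLt
  have hb := (π.symm b).isLt
  by_cases h1 : a ∈ leafEdges d <;> by_cases h2 : b ∈ leafEdges d
  · rw [if_pos h1, if_pos h2] at hab
    exact π.symm.injective (Fin.ext (by omega))
  · rw [if_pos h1, if_neg h2] at hab; exfalso; omega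
  · rw [if_neg h1, if_pos h2] at hab; exfalso; omega
  · rw [if_neg h1, if_neg h2] at hab
    exact π.symm.injective (Fin.ext (by omega))

/-- The rank of an edge in the sorted order. -/
def srank (d : ℕ) (π : Equiv.Perm (Fin (2 ^ (d + 1) - 2)))
    (e : Fin (2 ^ (d + 1) - 2)) : ℕ :=
  (Finset.univ.filter (fun j => skey d π j < skey d π e)).card

lemma srank_lt_of_skey_lt {π : Equiv.Perm (Fin (2 ^ (d + 1) - 2))}
    {a b : Fin (2 ^ (d + 1) - 2)} (h : skey d π a < skey d π b) :
    srank d π a < srank d π b := by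
  apply Finset.card_lt_card
  rw [Finset.ssubset_iff_of_subset (by
    intro j hj
    simp only [Finset.mem_filter, Finset.mem_univ, true_and] at hj ⊢
    omega)]
  exact ⟨a, by simp [h], by simp⟩

lemma srank_inj (π : Equiv.Perm (Fin (2 ^ (d + 1) - 2))) :
    Function.Injective (srank d π) := by
  intro a b hab
  rcases lt_trichotomy (skey d π a) (skey d π b) with h | h | h
  · exact absurd hab (Nat.ne_of_lt (srank_lt_of_skey_lt h))
  · exact skey_inj π h
  · exact absurd hab.symm (Nat.ne_of_lt (srank_lt_of_skey_lt h))

lemma srank_lt (π : Equiv.Perm (Fin (2 ^ (d + 1) - 2))) (e : Fin (2 ^ (d + 1) - 2)) :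
    srank d π e < 2 ^ (d + 1) - 2 := by
  unfold srank
  have hsub : Finset.univ.filter (fun j => skey d π j < skey d π e)
      ⊆ Finset.univ.erase e := by
    intro j hj
    simp only [Finset.mem_filter, Finset.mem_univ, true_and] at hj
    apply Finset.mem_erase.mpr
    exact ⟨fun hje => by subst hje; omega, Finset.mem_univ j⟩
  have := (Finset.card_le_card hsub).trans_eq
    (by rw [Finset.card_erase_of_mem (Finset.mem_univ e), Finset.card_univ, Fintype.card_fin])
  have hpos : 0 < 2 ^ (d + 1) - 2 := e.pos
  omega

/-- The leaf-last reordering of `π`: internal edges first, then leaf edges,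
each block in the order of `π`. -/
noncomputable def sortPerm (d : ℕ) (π : Equiv.Perm (Fin (2 ^ (d + 1) - 2))) :
    Equiv.Perm (Fin (2 ^ (d + 1) - 2)) :=
  (Equiv.ofBijective (fun e => (⟨srank d π e, srank_lt π e⟩ : Fin (2 ^ (d + 1) - 2)))
    (Finite.injective_iff_bijective.mp
      (fun a b hab => srank_inj π (congrArg Fin.val hab)))).symm

lemma sortPerm_symm_val (π : Equiv.Perm (Fin (2 ^ (d + 1) - 2)))
    (e : Fin (2 ^ (d + 1) - 2)) : (((sortPerm d π).symm e) : ℕ) = srank d π e := rfl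

lemma sortPerm_isLeafLast (hd : 1 ≤ d) (π : Equiv.Perm (Fin (2 ^ (d + 1) - 2))) :
    IsLeafLast d (sortPerm d π) := by
  intro i j hi hj
  rw [sortPerm_symm_val, sortPerm_symm_val]
  apply srank_lt_of_skey_lt
  unfold skey
  rw [if_neg hi, if_pos hj]
  have := (π.symm i).isLt
  omega

lemma sortPerm_leafCost_le (hd : 1 ≤ d) (π : Equiv.Perm (Fin (2 ^ (d + 1) - 2)))
    (x : Fin (2 ^ (d + 1) - 2) → Bool) :
    leafCost d (sortPerm d π) x ≤ leafCost d π x := by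
  classical
  have h2 : 2 ≤ 2 ^ d := Nat.one_lt_two_pow_iff.mpr (by omega)
  have hp := pow_succ_sub hd
  set s := naSteps (2 ^ (d + 1) - 2) (treeConn d) π x with hs
  set m := leafCost d π x with hm
  have hmcard : m = ((prefixSet (2 ^ (d + 1) - 2) π s) ∩ leafEdges d).card := rfl
  set internalSet : Finset (Fin (2 ^ (d + 1) - 2)) :=
    Finset.univ.filter (fun i => i.val < 2 ^ d - 2) with hintset
  have hIcard : internalSet.card = 2 ^ d - 2 := card_filter_val_lt _ _ (by omega)
  -- ranks of internal edges are < 2^d - 2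
  have hrank_int : ∀ e : Fin (2 ^ (d + 1) - 2), e ∉ leafEdges d →
      srank d π e < 2 ^ d - 2 := by
    intro e he
    have heI : e ∈ internalSet := by
      rw [hintset, Finset.mem_filter]
      exact ⟨Finset.mem_univ e, by have := mem_leafEdges.not.mp he; omega⟩
    have hsub : Finset.univ.filter (fun j => skey d π j < skey d π e)
        ⊆ internalSet.erase e := by
      intro j hj
      simp only [Finset.mem_filter, Finset.mem_univ, true_and] at hj
      have hje : j ≠ e := fun h => by subst h; omega
      have hkey : skey d π e < 2 ^ (d + 1) - 2 := by
        unfold skey; rw [if_neg he]; have := (π.symm e).isLt; omega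
      have hjint : j ∉ leafEdges d := by
        intro hjL
        have : 2 ^ (d + 1) - 2 ≤ skey d π j := by
          unfold skey; rw [if_pos hjL]; omega
        omega
      refine Finset.mem_erase.mpr ⟨hje, ?_⟩
      rw [hintset, Finset.mem_filter]
      exact ⟨Finset.mem_univ j, by have := mem_leafEdges.not.mp hjint; omega⟩
    have hle := (Finset.card_le_card hsub).trans_eq (Finset.card_erase_of_mem heI)
    rw [hIcard] at hle
    have hev := mem_leafEdges.not.mp he
    calc srank d π e ≤ 2 ^ d - 2 - 1 := hle
      _ < 2 ^ d - 2 := by omega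
  -- ranks of leaf edges are ≥ 2^d - 2
  have hrank_leaf : ∀ e : Fin (2 ^ (d + 1) - 2), e ∈ leafEdges d →
      2 ^ d - 2 ≤ srank d π e := by
    intro e he
    have hsub : internalSet ⊆ Finset.univ.filter (fun j => skey d π j < skey d π e) := by
      intro j hj
      rw [hintset, Finset.mem_filter] at hj
      have hjint : j ∉ leafEdges d := by rw [mem_leafEdges]; omega
      simp only [Finset.mem_filter, Finset.mem_univ, true_and]
      have h1 : skey d π j < 2 ^ (d + 1) - 2 := by
        unfold skey; rw [if_neg hjint]; have := (π.symm j).isLt; omega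
      have h2' : 2 ^ (d + 1) - 2 ≤ skey d π e := by unfold skey; rw [if_pos he]; omega
      omega
    have hle := Finset.card_le_card hsub
    rw [hIcard] at hle
    exact hle
  -- ranks of leaf edges tested by π before stopping are < (2^d - 2) + m
  have hrank_pleaf : ∀ e : Fin (2 ^ (d + 1) - 2), e ∈ leafEdges d → (π.symm e).val < s →
      srank d π e < (2 ^ d - 2) + m := by
    intro e he hes
    have heP : e ∈ (prefixSet (2 ^ (d + 1) - 2) π s) ∩ leafEdges d :=
      Finset.mem_inter.mpr ⟨(mem_prefixSet π).mpr hes, he⟩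
    have hm1 : 1 ≤ m := by
      rw [hmcard]
      exact Finset.card_pos.mpr ⟨e, heP⟩
    have hsub : Finset.univ.filter (fun j => skey d π j < skey d π e)
        ⊆ internalSet ∪ ((prefixSet (2 ^ (d + 1) - 2) π s ∩ leafEdges d).erase e) := by
      intro j hj
      simp only [Finset.mem_filter, Finset.mem_univ, true_and] at hj
      by_cases hjL : j ∈ leafEdges d
      · have h1 : skey d π j = (2 ^ (d + 1) - 2) + (π.symm j).val := by
          unfold skey; rw [if_pos hjL]
        have h2' : skey d π e = (2 ^ (d + 1) - 2) + (π.symm e).val := by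
          unfold skey; rw [if_pos he]
        have hje : j ≠ e := fun h => by subst h; omega
        apply Finset.mem_union_right
        refine Finset.mem_erase.mpr ⟨hje, Finset.mem_inter.mpr ⟨?_, hjL⟩⟩
        rw [mem_prefixSet]
        omega
      · apply Finset.mem_union_left
        rw [hintset, Finset.mem_filter]
        exact ⟨Finset.mem_univ j, by have := mem_leafEdges.not.mp hjL; omega⟩
    have hle := Finset.card_le_card hsub
    have hle2 := Finset.card_union_le internalSet
      ((prefixSet (2 ^ (d + 1) - 2) π s ∩ leafEdges d).erase e)
    rw [hIcard] at hle2
    have hle3 := (Finset.card_erase_of_mem heP)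
    unfold srank
    omega
  -- the prefix of π is contained in the ((2^d-2)+m)-prefix of sortPerm
  have hsubset : prefixSet (2 ^ (d + 1) - 2) π s
      ⊆ prefixSet (2 ^ (d + 1) - 2) (sortPerm d π) ((2 ^ d - 2) + m) := by
    intro e heP
    rw [mem_prefixSet] at heP ⊢
    rw [sortPerm_symm_val]
    by_cases heL : e ∈ leafEdges d
    · exact hrank_pleaf e heL heP
    · have := hrank_int e heL; omega
  -- sortPerm stops within (2^d-2) + m steps
  have hstop : naSteps (2 ^ (d + 1) - 2) (treeConn d) (sortPerm d π) x ≤ (2 ^ d - 2) + m :=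
    naSteps_le (det_mono (det_naSteps (treeConn d) π x) hsubset)
  -- that prefix of sortPerm contains at most m leaf edges
  have hcount : ((prefixSet (2 ^ (d + 1) - 2) (sortPerm d π) ((2 ^ d - 2) + m))
      ∩ leafEdges d).card ≤ m := by
    have hmaps : ∀ e ∈ (prefixSet (2 ^ (d + 1) - 2) (sortPerm d π) ((2 ^ d - 2) + m))
        ∩ leafEdges d, srank d π e ∈ Finset.Ico (2 ^ d - 2) ((2 ^ d - 2) + m) := by
      intro e he
      rw [Finset.mem_inter, mem_prefixSet] at he
      rw [sortPerm_symm_val] at he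
      exact Finset.mem_Ico.mpr ⟨hrank_leaf e he.2, he.1⟩
    have := Finset.card_le_card_of_injOn (fun e => srank d π e) hmaps
      (fun a _ b _ hab => srank_inj π hab)
    rw [Nat.card_Ico] at this
    omega
  refine le_trans ?_ hcount
  unfold leafCost
  exact Finset.card_le_card
    (Finset.inter_subset_inter (prefixSet_mono _ hstop) (le_refl _))

end Sorting

section Weights

variable {d : ℕ} {ε : ℝ}

lemma prodWeight_nonneg (hε0 : 0 < ε) (hε1 : ε ≤ 1/2) (n : ℕ) (x : Fin n → Bool) :
    0 ≤ prodWeight n (fun _ => (1 + ε) / 2) x := by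
  apply Finset.prod_nonneg
  intro i _
  split
  · linarith
  · linarith

lemma denom_pos (hd : 1 ≤ d) (hε0 : 0 < ε) (hε1 : ε ≤ 1/2) :
    0 < ∑ x : Fin (2 ^ (d + 1) - 2) → Bool,
      prodWeight (2 ^ (d + 1) - 2) (fun _ => (1 + ε) / 2) x *
        (if treeConn d x then 1 else 0) := by
  apply Finset.sum_pos'
  · intro x _
    apply mul_nonneg (prodWeight_nonneg hε0 hε1 _ x)
    split <;> norm_num
  · refine ⟨fun _ => true, Finset.mem_univ _, ?_⟩
    rw [treeConn_allTrue hd, if_pos rfl, mul_one]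
    apply Finset.prod_pos
    intro i _
    rw [if_pos rfl]
    linarith

lemma condExp_mono (hd : 1 ≤ d) (hε0 : 0 < ε) (hε1 : ε ≤ 1/2)
    {π π' : Equiv.Perm (Fin (2 ^ (d + 1) - 2))}
    (h : ∀ x, treeConn d x = true → leafCost d π' x ≤ leafCost d π x) :
    condExpLeafCost d ε π' ≤ condExpLeafCost d ε π := by
  unfold condExpLeafCost
  have hD : (0:ℝ) < ∑ x : Fin (2 ^ (d + 1) - 2) → Bool,
      prodWeight (2 ^ (d + 1) - 2) (fun _ => (1 + ε) / 2) x *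
        (if treeConn d x then 1 else 0) := denom_pos hd hε0 hε1
  rw [div_le_div_iff_of_pos_right hD]
  apply Finset.sum_le_sum
  intro x _
  apply mul_le_mul_of_nonneg_left ?_ (prodWeight_nonneg hε0 hε1 _ x)
  by_cases hx : treeConn d x = true
  · rw [if_pos hx, if_pos hx]
    exact Nat.cast_le.mpr (h x hx)
  · rw [if_neg hx, if_neg hx]

end Weights


section Part1

variable {d : ℕ} {ε : ℝ}

lemma exists_opt_leafLast (hε0 : 0 < ε) (hε1 : ε ≤ 1/2) (hd : 1 ≤ d) :
    ∃ S : Equiv.Perm (Fin (2 ^ (d + 1) - 2)), IsLeafLast d S ∧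
      ∀ π : Equiv.Perm (Fin (2 ^ (d + 1) - 2)),
        condExpLeafCost d ε S ≤ condExpLeafCost d ε π := by
  classical
  have h2 : 2 ≤ 2 ^ d := Nat.one_lt_two_pow_iff.mpr (by omega)
  have hne : (Finset.univ.filter (fun π : Equiv.Perm (Fin (2 ^ (d + 1) - 2)) =>
      IsLeafLast d π)).Nonempty := by
    refine ⟨Equiv.refl _, Finset.mem_filter.mpr ⟨Finset.mem_univ _, ?_⟩⟩
    intro i j hi hj
    simp only [Equiv.refl_symm, Equiv.refl_apply]
    have ha := mem_leafEdges.not.mp hi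
    have hb := mem_leafEdges.mp hj
    omega
  obtain ⟨S, hSmem, hSmin⟩ := Finset.exists_min_image _ (condExpLeafCost d ε) hne
  refine ⟨S, (Finset.mem_filter.mp hSmem).2, fun π => ?_⟩
  calc condExpLeafCost d ε S ≤ condExpLeafCost d ε (sortPerm d π) :=
        hSmin _ (Finset.mem_filter.mpr ⟨Finset.mem_univ _, sortPerm_isLeafLast hd π⟩)
    _ ≤ condExpLeafCost d ε π :=
        condExp_mono hd hε0 hε1 (fun x _ => sortPerm_leafCost_le hd π x)

end Part1

section FirstAlive

variable {d : ℕ} {S : Equiv.Perm (Fin (2 ^ (d + 1) - 2))}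

lemma card_leaf_before (hd : 1 ≤ d) (hLL : IsLeafLast d S)
    {e : Fin (2 ^ (d + 1) - 2)} (he : e ∈ leafEdges d) :
    ((leafEdges d).filter (fun j => (S.symm j).val < (S.symm e).val)).card
      = (S.symm e).val - (2 ^ d - 2) := by
  have hset : (leafEdges d).filter (fun j => (S.symm j).val < (S.symm e).val)
      = prefixSet (2 ^ (d + 1) - 2) S ((S.symm e).val) ∩ leafEdges d := by
    ext j
    simp only [Finset.mem_filter, Finset.mem_inter, mem_prefixSet]
    tauto
  rw [hset, card_prefix_inter_leaf hd hLL (leaf_pos_ge hd hLL he)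
    (le_of_lt (S.symm e).isLt)]

lemma firstAliveAt_iff (hd : 1 ≤ d) (hLL : IsLeafLast d S)
    {x : Fin (2 ^ (d + 1) - 2) → Bool} {m : ℕ} (hm1 : 1 ≤ m)
    {e0 : Fin (2 ^ (d + 1) - 2)} (he0L : e0 ∈ leafEdges d)
    (he0pos : (S.symm e0).val = 2 ^ d - 2 + m - 1) :
    firstAliveAt d S m x = true ↔
      (leafAlive d x (e0.val + 2) = true ∧
       ∀ e ∈ leafEdges d, (S.symm e).val < 2 ^ d - 2 + m - 1 →
         leafAlive d x (e.val + 2) = false) := by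
  unfold firstAliveAt
  rw [decide_eq_true_iff]
  constructor
  · rintro ⟨i', hi'L, hcard, hal, hdead⟩
    rw [card_leaf_before hd hLL hi'L] at hcard
    have hge := leaf_pos_ge hd hLL hi'L
    have hpos : (S.symm i').val = 2 ^ d - 2 + m - 1 := by omega
    have hi'e0 : i' = e0 := by
      have : S.symm i' = S.symm e0 := Fin.ext (by rw [hpos, he0pos])
      exact S.symm.injective this
    subst hi'e0
    exact ⟨hal, fun e heL hlt => hdead e heL (by omega)⟩
  · rintro ⟨hal, hdead⟩
    refine ⟨e0, he0L, ?_, hal, fun e heL hlt => hdead e heL (by omega)⟩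
    rw [card_leaf_before hd hLL he0L, he0pos]
    omega

end FirstAlive



lemma ind_le_ind {P Q : Prop} [Decidable P] [Decidable Q] (h : P → Q) :
    (if P then (1:ℝ) else 0) ≤ if Q then 1 else 0 := by
  by_cases hP : P
  · rw [if_pos hP, if_pos (h hP)]
  · rw [if_neg hP]
    split <;> norm_num

section Part2

variable {d : ℕ} {ε : ℝ}

lemma prob_mono (hε0 : 0 < ε) (hε1 : ε ≤ 1/2) (hd : 1 ≤ d)
    (S : Equiv.Perm (Fin (2 ^ (d + 1) - 2))) (hLL : IsLeafLast d S)
    (hopt : ∀ π : Equiv.Perm (Fin (2 ^ (d + 1) - 2)),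
      condExpLeafCost d ε S ≤ condExpLeafCost d ε π)
    (l : ℕ) (hl1 : 1 ≤ l) (hl2 : l ≤ 2 ^ d - 1) :
    condProbFirstAliveAt d ε S (l + 1) ≤ condProbFirstAliveAt d ε S l := by
  classical
  have h2 : 2 ≤ 2 ^ d := Nat.one_lt_two_pow_iff.mpr (by omega)
  have hp := pow_succ_sub hd
  have haval : 2 ^ d - 2 + l - 1 < 2 ^ (d + 1) - 2 := by omega
  have hbval : 2 ^ d - 2 + l < 2 ^ (d + 1) - 2 := by omega
  set aIdx : Fin (2 ^ (d + 1) - 2) := ⟨2 ^ d - 2 + l - 1, haval⟩ with haIdx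
  set bIdx : Fin (2 ^ (d + 1) - 2) := ⟨2 ^ d - 2 + l, hbval⟩ with hbIdx
  have hav : (aIdx : ℕ) = 2 ^ d - 2 + l - 1 := rfl
  have hbv : (bIdx : ℕ) = 2 ^ d - 2 + l := rfl
  set S' := (Equiv.swap aIdx bIdx).trans S with hS'def
  have hS'symm : ∀ e, S'.symm e = Equiv.swap aIdx bIdx (S.symm e) := by
    intro e
    rw [hS'def, Equiv.symm_trans_apply, Equiv.symm_swap]
  set iE := S aIdx with hiE
  set jE := S bIdx with hjE
  have hSiE : S.symm iE = aIdx := by rw [hiE, Equiv.symm_apply_apply]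
  have hSjE : S.symm jE = bIdx := by rw [hjE, Equiv.symm_apply_apply]
  have hiVal : (S.symm iE).val = 2 ^ d - 2 + l - 1 := by rw [hSiE]
  have hjVal : (S.symm jE).val = 2 ^ d - 2 + l := by rw [hSjE]
  have hS'iE : S'.symm iE = bIdx := by rw [hS'symm, hSiE, Equiv.swap_apply_left]
  have hS'jE : S'.symm jE = aIdx := by rw [hS'symm, hSjE, Equiv.swap_apply_right]
  have hiVal' : (S'.symm iE).val = 2 ^ d - 2 + l := by rw [hS'iE]
  have hjVal' : (S'.symm jE).val = 2 ^ d - 2 + l - 1 := by rw [hS'jE]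
  have hiLeaf : iE ∈ leafEdges d := by
    by_contra h
    have := internal_pos_lt hd hLL h
    rw [hiVal] at this
    omega
  have hjLeaf : jE ∈ leafEdges d := by
    by_contra h
    have := internal_pos_lt hd hLL h
    rw [hjVal] at this
    omega
  have hpos_ne : ∀ e, e ≠ iE → e ≠ jE → S'.symm e = S.symm e := by
    intro e h1 h2'
    rw [hS'symm]
    apply Equiv.swap_apply_of_ne_of_ne
    · intro h
      exact h1 (by rw [hiE, ← h, Equiv.apply_symm_apply])
    · intro h
      exact h2' (by rw [hjE, ← h, Equiv.apply_symm_apply])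
  have heq_iE : ∀ e, (S.symm e).val = 2 ^ d - 2 + l - 1 → e = iE := by
    intro e h
    have h' : S.symm e = aIdx := Fin.ext (by rw [h, hav])
    rw [hiE, ← h', Equiv.apply_symm_apply]
  have hLL' : IsLeafLast d S' := by
    intro e f he hf
    have heiE : e ≠ iE := fun h => he (h ▸ hiLeaf)
    have hejE : e ≠ jE := fun h => he (h ▸ hjLeaf)
    rw [hpos_ne e heiE hejE]
    have h1 := internal_pos_lt hd hLL he
    rcases eq_or_ne f iE with rfl | hfiE
    · rw [hiVal']; omega
    rcases eq_or_ne f jE with rfl | hfjE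
    · rw [hjVal']; omega
    · rw [hpos_ne f hfiE hfjE]
      have := leaf_pos_ge hd hLL hf
      omega
  have hprefix : ∀ k, k ≠ 2 ^ d - 2 + l →
      prefixSet (2 ^ (d + 1) - 2) S k = prefixSet (2 ^ (d + 1) - 2) S' k := by
    intro k hk
    ext e
    rw [mem_prefixSet, mem_prefixSet]
    rcases eq_or_ne e iE with rfl | h1
    · rw [hiVal, hiVal']; omega
    rcases eq_or_ne e jE with rfl | h2'
    · rw [hjVal, hjVal']; omega
    · rw [hpos_ne e h1 h2']
  -- the pointwise cost-difference identity
  have hcost : ∀ x : Fin (2 ^ (d + 1) - 2) → Bool,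
      (if treeConn d x then (leafCost d S' x : ℝ) else 0)
        - (if treeConn d x then (leafCost d S x : ℝ) else 0)
      = (if (¬ ∃ e ∈ leafEdges d, (S.symm e).val < 2 ^ d - 2 + l - 1 ∧ leafAlive d x (e.val + 2) = true) ∧ leafAlive d x (iE.val + 2) = true ∧ ¬ (leafAlive d x (jE.val + 2) = true) then (1:ℝ) else 0) - (if (¬ ∃ e ∈ leafEdges d, (S.symm e).val < 2 ^ d - 2 + l - 1 ∧ leafAlive d x (e.val + 2) = true) ∧ ¬ (leafAlive d x (iE.val + 2) = true) ∧ (leafAlive d x (jE.val + 2) = true) then (1:ℝ) else 0) := by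
    intro x
    by_cases hconn : treeConn d x = true
    · rw [if_pos hconn, if_pos hconn]
      by_cases hC : ∃ e ∈ leafEdges d, (S.symm e).val < 2 ^ d - 2 + l - 1 ∧
          leafAlive d x (e.val + 2) = true
      · -- an earlier leaf is alive: both stop at the same time
        obtain ⟨e, heL, hepos, hea⟩ := hC
        have he1 : e ≠ iE := by intro h; subst h; omega
        have he2 : e ≠ jE := by intro h; subst h; omega
        have hsteps : naSteps (2 ^ (d + 1) - 2) (treeConn d) S x
            = naSteps (2 ^ (d + 1) - 2) (treeConn d) S' x := by
          apply naSteps_congr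
          intro k
          rcases eq_or_ne k (2 ^ d - 2 + l) with rfl | hk
          · constructor
            · intro _
              exact (det_iff_alive hd hLL' hconn (by omega)).mpr
                ⟨e, heL, by rw [hpos_ne e he1 he2]; omega, hea⟩
            · intro _
              exact (det_iff_alive hd hLL hconn (by omega)).mpr
                ⟨e, heL, by omega, hea⟩
          · rw [hprefix k hk]
        rw [if_neg (show ¬ ((¬ ∃ e ∈ leafEdges d, (S.symm e).val < 2 ^ d - 2 + l - 1 ∧ leafAlive d x (e.val + 2) = true) ∧ leafAlive d x (iE.val + 2) = true ∧ ¬ (leafAlive d x (jE.val + 2) = true)) from fun h => h.1 ⟨e, heL, hepos, hea⟩),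
          if_neg (show ¬ ((¬ ∃ e ∈ leafEdges d, (S.symm e).val < 2 ^ d - 2 + l - 1 ∧ leafAlive d x (e.val + 2) = true) ∧ ¬ (leafAlive d x (iE.val + 2) = true) ∧ (leafAlive d x (jE.val + 2) = true)) from fun h => h.1 ⟨e, heL, hepos, hea⟩),
          (leafCost_eq_steps hd hLL hconn).2, (leafCost_eq_steps hd hLL' hconn).2, hsteps]
        ring
      · by_cases hA : leafAlive d x (iE.val + 2) = true
        · have hstepS : naSteps (2 ^ (d + 1) - 2) (treeConn d) S x = 2 ^ d - 2 + l := by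
            have := naSteps_eq_of hd hLL hconn (m := 2 ^ d - 2 + l - 1) (by omega)
              ⟨iE, hiLeaf, by omega, hA⟩ hC
            omega
          by_cases hB : leafAlive d x (jE.val + 2) = true
          · -- both alive: both stop at 2^d-2+l
            have hstepS' : naSteps (2 ^ (d + 1) - 2) (treeConn d) S' x
                = 2 ^ d - 2 + l := by
              have := naSteps_eq_of hd hLL' hconn (m := 2 ^ d - 2 + l - 1) (by omega)
                ⟨jE, hjLeaf, by omega, hB⟩
                (by
                  rintro ⟨e, heL, hepos, hea⟩
                  have he1 : e ≠ iE := by intro h; subst h; omega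
                  have he2 : e ≠ jE := by intro h; subst h; omega
                  rw [hpos_ne e he1 he2] at hepos
                  exact hC ⟨e, heL, hepos, hea⟩)
              omega
            rw [if_neg (show ¬ ((¬ ∃ e ∈ leafEdges d, (S.symm e).val < 2 ^ d - 2 + l - 1 ∧ leafAlive d x (e.val + 2) = true) ∧ leafAlive d x (iE.val + 2) = true ∧ ¬ (leafAlive d x (jE.val + 2) = true)) from fun h => h.2.2 hB),
              if_neg (show ¬ ((¬ ∃ e ∈ leafEdges d, (S.symm e).val < 2 ^ d - 2 + l - 1 ∧ leafAlive d x (e.val + 2) = true) ∧ ¬ (leafAlive d x (iE.val + 2) = true) ∧ (leafAlive d x (jE.val + 2) = true)) from fun h => h.2.1 hA),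
              (leafCost_eq_steps hd hLL hconn).2, (leafCost_eq_steps hd hLL' hconn).2,
              hstepS, hstepS']
            ring
          · -- a alive, b dead: S stops at 2^d-2+l, S' at 2^d-2+l+1
            have hstepS' : naSteps (2 ^ (d + 1) - 2) (treeConn d) S' x
                = 2 ^ d - 2 + l + 1 := by
              have := naSteps_eq_of hd hLL' hconn (m := 2 ^ d - 2 + l) (by omega)
                ⟨iE, hiLeaf, by omega, hA⟩
                (by
                  rintro ⟨e, heL, hepos, hea⟩
                  rcases eq_or_ne e iE with rfl | he1
                  · omega
                  rcases eq_or_ne e jE with rfl | he2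
                  · exact hB hea
                  · rw [hpos_ne e he1 he2] at hepos
                    have hne : (S.symm e).val ≠ 2 ^ d - 2 + l - 1 :=
                      fun h => he1 (heq_iE e h)
                    exact hC ⟨e, heL, by omega, hea⟩)
              omega
            rw [if_pos (show (¬ ∃ e ∈ leafEdges d, (S.symm e).val < 2 ^ d - 2 + l - 1 ∧ leafAlive d x (e.val + 2) = true) ∧ leafAlive d x (iE.val + 2) = true ∧ ¬ (leafAlive d x (jE.val + 2) = true) from ⟨hC, hA, hB⟩),
              if_neg (show ¬ ((¬ ∃ e ∈ leafEdges d, (S.symm e).val < 2 ^ d - 2 + l - 1 ∧ leafAlive d x (e.val + 2) = true) ∧ ¬ (leafAlive d x (iE.val + 2) = true) ∧ (leafAlive d x (jE.val + 2) = true)) from fun h => h.2.1 hA),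
              (leafCost_eq_steps hd hLL hconn).2, (leafCost_eq_steps hd hLL' hconn).2,
              hstepS, hstepS']
            have e1 : 2 ^ d - 2 + l + 1 - (2 ^ d - 2) = l + 1 := by omega
            have e2 : 2 ^ d - 2 + l - (2 ^ d - 2) = l := by omega
            rw [e1, e2]
            push_cast
            ring
        · by_cases hB : leafAlive d x (jE.val + 2) = true
          · -- a dead, b alive: S stops at 2^d-2+l+1, S' at 2^d-2+l
            have hstepS : naSteps (2 ^ (d + 1) - 2) (treeConn d) S x
                = 2 ^ d - 2 + l + 1 := by
              have := naSteps_eq_of hd hLL hconn (m := 2 ^ d - 2 + l) (by omega)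
                ⟨jE, hjLeaf, by omega, hB⟩
                (by
                  rintro ⟨e, heL, hepos, hea⟩
                  by_cases he : (S.symm e).val = 2 ^ d - 2 + l - 1
                  · exact hA (heq_iE e he ▸ hea)
                  · exact hC ⟨e, heL, by omega, hea⟩)
              omega
            have hstepS' : naSteps (2 ^ (d + 1) - 2) (treeConn d) S' x
                = 2 ^ d - 2 + l := by
              have := naSteps_eq_of hd hLL' hconn (m := 2 ^ d - 2 + l - 1) (by omega)
                ⟨jE, hjLeaf, by omega, hB⟩
                (by
                  rintro ⟨e, heL, hepos, hea⟩
                  have he1 : e ≠ iE := by intro h; subst h; omega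
                  have he2 : e ≠ jE := by intro h; subst h; omega
                  rw [hpos_ne e he1 he2] at hepos
                  exact hC ⟨e, heL, hepos, hea⟩)
              omega
            rw [if_neg (show ¬ ((¬ ∃ e ∈ leafEdges d, (S.symm e).val < 2 ^ d - 2 + l - 1 ∧ leafAlive d x (e.val + 2) = true) ∧ leafAlive d x (iE.val + 2) = true ∧ ¬ (leafAlive d x (jE.val + 2) = true)) from fun h => hA h.2.1),
              if_pos (show (¬ ∃ e ∈ leafEdges d, (S.symm e).val < 2 ^ d - 2 + l - 1 ∧ leafAlive d x (e.val + 2) = true) ∧ ¬ (leafAlive d x (iE.val + 2) = true) ∧ (leafAlive d x (jE.val + 2) = true) from ⟨hC, hA, hB⟩),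
              (leafCost_eq_steps hd hLL hconn).2, (leafCost_eq_steps hd hLL' hconn).2,
              hstepS, hstepS']
            have e1 : 2 ^ d - 2 + l + 1 - (2 ^ d - 2) = l + 1 := by omega
            have e2 : 2 ^ d - 2 + l - (2 ^ d - 2) = l := by omega
            rw [e1, e2]
            push_cast
            ring
          · -- both dead: both strategies behave identically
            have hsteps : naSteps (2 ^ (d + 1) - 2) (treeConn d) S x
                = naSteps (2 ^ (d + 1) - 2) (treeConn d) S' x := by
              apply naSteps_congr
              intro k
              rcases eq_or_ne k (2 ^ d - 2 + l) with rfl | hk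
              · constructor
                · intro h
                  obtain ⟨e, heL, hepos, hea⟩ :=
                    (det_iff_alive hd hLL hconn (by omega)).mp h
                  exfalso
                  by_cases he : (S.symm e).val = 2 ^ d - 2 + l - 1
                  · exact hA (heq_iE e he ▸ hea)
                  · exact hC ⟨e, heL, by omega, hea⟩
                · intro h
                  obtain ⟨e, heL, hepos, hea⟩ :=
                    (det_iff_alive hd hLL' hconn (by omega)).mp h
                  exfalso
                  rcases eq_or_ne e iE with rfl | he1
                  · exact hA hea
                  rcases eq_or_ne e jE with rfl | he2
                  · exact hB hea
                  · rw [hpos_ne e he1 he2] at hepos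
                    by_cases he : (S.symm e).val = 2 ^ d - 2 + l - 1
                    · exact hA (heq_iE e he ▸ hea)
                    · exact hC ⟨e, heL, by omega, hea⟩
              · rw [hprefix k hk]
            rw [if_neg (show ¬ ((¬ ∃ e ∈ leafEdges d, (S.symm e).val < 2 ^ d - 2 + l - 1 ∧ leafAlive d x (e.val + 2) = true) ∧ leafAlive d x (iE.val + 2) = true ∧ ¬ (leafAlive d x (jE.val + 2) = true)) from fun h => hA h.2.1),
              if_neg (show ¬ ((¬ ∃ e ∈ leafEdges d, (S.symm e).val < 2 ^ d - 2 + l - 1 ∧ leafAlive d x (e.val + 2) = true) ∧ ¬ (leafAlive d x (iE.val + 2) = true) ∧ (leafAlive d x (jE.val + 2) = true)) from fun h => hB h.2.2),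
              (leafCost_eq_steps hd hLL hconn).2, (leafCost_eq_steps hd hLL' hconn).2,
              hsteps]
            ring
    · -- not connected: everything vanishes
      have hna : ¬ leafAlive d x (iE.val + 2) = true :=
        fun h => hconn (conn_of_alive hd hiLeaf h)
      have hnb : ¬ leafAlive d x (jE.val + 2) = true :=
        fun h => hconn (conn_of_alive hd hjLeaf h)
      rw [if_neg hconn, if_neg hconn,
        if_neg (show ¬ ((¬ ∃ e ∈ leafEdges d, (S.symm e).val < 2 ^ d - 2 + l - 1 ∧ leafAlive d x (e.val + 2) = true) ∧ leafAlive d x (iE.val + 2) = true ∧ ¬ (leafAlive d x (jE.val + 2) = true)) from fun h => hna h.2.1),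
        if_neg (show ¬ ((¬ ∃ e ∈ leafEdges d, (S.symm e).val < 2 ^ d - 2 + l - 1 ∧ leafAlive d x (e.val + 2) = true) ∧ ¬ (leafAlive d x (iE.val + 2) = true) ∧ (leafAlive d x (jE.val + 2) = true)) from fun h => hnb h.2.2)]
  -- from optimality: the numerator inequality
  have hD : (0:ℝ) < ∑ x : Fin (2 ^ (d + 1) - 2) → Bool,
      prodWeight (2 ^ (d + 1) - 2) (fun _ => (1 + ε) / 2) x *
        (if treeConn d x then 1 else 0) := denom_pos hd hε0 hε1
  have hopt' := hopt S'
  unfold condExpLeafCost at hopt'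
  rw [div_le_div_iff_of_pos_right hD] at hopt'
  have hnum :
      (∑ x : Fin (2 ^ (d + 1) - 2) → Bool, prodWeight (2 ^ (d + 1) - 2) (fun _ => (1 + ε) / 2) x * (if (¬ ∃ e ∈ leafEdges d, (S.symm e).val < 2 ^ d - 2 + l - 1 ∧ leafAlive d x (e.val + 2) = true) ∧ ¬ (leafAlive d x (iE.val + 2) = true) ∧ (leafAlive d x (jE.val + 2) = true) then (1:ℝ) else 0)) ≤ ∑ x : Fin (2 ^ (d + 1) - 2) → Bool, prodWeight (2 ^ (d + 1) - 2) (fun _ => (1 + ε) / 2) x * (if (¬ ∃ e ∈ leafEdges d, (S.symm e).val < 2 ^ d - 2 + l - 1 ∧ leafAlive d x (e.val + 2) = true) ∧ leafAlive d x (iE.val + 2) = true ∧ ¬ (leafAlive d x (jE.val + 2) = true) then (1:ℝ) else 0) := by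
    have hsplit :
        (∑ x : Fin (2 ^ (d + 1) - 2) → Bool, prodWeight (2 ^ (d + 1) - 2) (fun _ => (1 + ε) / 2) x * (if treeConn d x then (leafCost d S' x : ℝ) else 0))
          - (∑ x : Fin (2 ^ (d + 1) - 2) → Bool, prodWeight (2 ^ (d + 1) - 2) (fun _ => (1 + ε) / 2) x * (if treeConn d x then (leafCost d S x : ℝ) else 0))
        = (∑ x : Fin (2 ^ (d + 1) - 2) → Bool, prodWeight (2 ^ (d + 1) - 2) (fun _ => (1 + ε) / 2) x * (if (¬ ∃ e ∈ leafEdges d, (S.symm e).val < 2 ^ d - 2 + l - 1 ∧ leafAlive d x (e.val + 2) = true) ∧ leafAlive d x (iE.val + 2) = true ∧ ¬ (leafAlive d x (jE.val + 2) = true) then (1:ℝ) else 0)) - (∑ x : Fin (2 ^ (d + 1) - 2) → Bool, prodWeight (2 ^ (d + 1) - 2) (fun _ => (1 + ε) / 2) x * (if (¬ ∃ e ∈ leafEdges d, (S.symm e).val < 2 ^ d - 2 + l - 1 ∧ leafAlive d x (e.val + 2) = true) ∧ ¬ (leafAlive d x (iE.val + 2) = true) ∧ (leafAlive d x (jE.val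 + 2) = true) then (1:ℝ) else 0)) := by
      rw [← Finset.sum_sub_distrib, ← Finset.sum_sub_distrib]
      apply Finset.sum_congr rfl
      intro x _
      rw [← mul_sub, ← mul_sub, hcost x]
    linarith
  -- identify the first-alive events
  have hidl : ∀ x : Fin (2 ^ (d + 1) - 2) → Bool,
      (if treeConn d x ∧ firstAliveAt d S l x then (1:ℝ) else 0) = (if (¬ ∃ e ∈ leafEdges d, (S.symm e).val < 2 ^ d - 2 + l - 1 ∧ leafAlive d x (e.val + 2) = true) ∧ leafAlive d x (iE.val + 2) = true then (1:ℝ) else 0) := by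
    intro x
    apply if_congr ?_ rfl rfl
    constructor
    · rintro ⟨hconn, hfa⟩
      rw [firstAliveAt_iff hd hLL hl1 hiLeaf hiVal] at hfa
      obtain ⟨hal, hdead⟩ := hfa
      refine ⟨?_, hal⟩
      rintro ⟨e, heL, hepos, hea⟩
      rw [hdead e heL hepos] at hea
      exact Bool.false_ne_true hea
    · rintro ⟨hnC, hal⟩
      refine ⟨conn_of_alive hd hiLeaf hal, ?_⟩
      rw [firstAliveAt_iff hd hLL hl1 hiLeaf hiVal]
      refine ⟨hal, fun e heL hepos => ?_⟩
      by_contra h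
      rw [Bool.not_eq_false] at h
      exact hnC ⟨e, heL, hepos, h⟩
  have hjVal2 : (S.symm jE).val = 2 ^ d - 2 + (l + 1) - 1 := by omega
  have hidl1 : ∀ x : Fin (2 ^ (d + 1) - 2) → Bool,
      (if treeConn d x ∧ firstAliveAt d S (l + 1) x then (1:ℝ) else 0) = (if (¬ ∃ e ∈ leafEdges d, (S.symm e).val < 2 ^ d - 2 + l - 1 ∧ leafAlive d x (e.val + 2) = true) ∧ ¬ (leafAlive d x (iE.val + 2) = true) ∧ (leafAlive d x (jE.val + 2) = true) then (1:ℝ) else 0) := by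
    intro x
    apply if_congr ?_ rfl rfl
    constructor
    · rintro ⟨hconn, hfa⟩
      rw [firstAliveAt_iff hd hLL (by omega) hjLeaf hjVal2] at hfa
      obtain ⟨hal, hdead⟩ := hfa
      refine ⟨?_, ?_, hal⟩
      · rintro ⟨e, heL, hepos, hea⟩
        rw [hdead e heL (by omega)] at hea
        exact Bool.false_ne_true hea
      · intro h
        have hdd := hdead iE hiLeaf (by omega)
        rw [hdd] at h
        exact Bool.false_ne_true h
    · rintro ⟨hnC, hna, hb⟩
      refine ⟨conn_of_alive hd hjLeaf hb, ?_⟩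
      rw [firstAliveAt_iff hd hLL (by omega) hjLeaf hjVal2]
      refine ⟨hb, fun e heL hepos => ?_⟩
      by_contra h
      rw [Bool.not_eq_false] at h
      by_cases he : (S.symm e).val = 2 ^ d - 2 + l - 1
      · exact hna (heq_iE e he ▸ h)
      · exact hnC ⟨e, heL, by omega, h⟩
  -- final computation
  unfold condProbFirstAliveAt
  rw [div_le_div_iff_of_pos_right hD]
  calc ∑ x : Fin (2 ^ (d + 1) - 2) → Bool,
        prodWeight (2 ^ (d + 1) - 2) (fun _ => (1 + ε) / 2) x * (if treeConn d x ∧ firstAliveAt d S (l + 1) x then 1 else 0)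
      = ∑ x : Fin (2 ^ (d + 1) - 2) → Bool, prodWeight (2 ^ (d + 1) - 2) (fun _ => (1 + ε) / 2) x * (if (¬ ∃ e ∈ leafEdges d, (S.symm e).val < 2 ^ d - 2 + l - 1 ∧ leafAlive d x (e.val + 2) = true) ∧ ¬ (leafAlive d x (iE.val + 2) = true) ∧ (leafAlive d x (jE.val + 2) = true) then (1:ℝ) else 0) :=
        Finset.sum_congr rfl (fun x _ => by rw [hidl1 x])
    _ ≤ ∑ x : Fin (2 ^ (d + 1) - 2) → Bool, prodWeight (2 ^ (d + 1) - 2) (fun _ => (1 + ε) / 2) x * (if (¬ ∃ e ∈ leafEdges d, (S.symm e).val < 2 ^ d - 2 + l - 1 ∧ leafAlive d x (e.val + 2) = true) ∧ leafAlive d x (iE.val + 2) = true ∧ ¬ (leafAlive d x (jE.val + 2) = true) then (1:ℝ) else 0) := hnum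
    _ ≤ ∑ x : Fin (2 ^ (d + 1) - 2) → Bool, prodWeight (2 ^ (d + 1) - 2) (fun _ => (1 + ε) / 2) x * (if (¬ ∃ e ∈ leafEdges d, (S.symm e).val < 2 ^ d - 2 + l - 1 ∧ leafAlive d x (e.val + 2) = true) ∧ leafAlive d x (iE.val + 2) = true then (1:ℝ) else 0) := by
        apply Finset.sum_le_sum
        intro x _
        exact mul_le_mul_of_nonneg_left (ind_le_ind (fun h => ⟨h.1, h.2.1⟩))
          (prodWeight_nonneg hε0 hε1 _ x)
    _ = ∑ x : Fin (2 ^ (d + 1) - 2) → Bool,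
        prodWeight (2 ^ (d + 1) - 2) (fun _ => (1 + ε) / 2) x * (if treeConn d x ∧ firstAliveAt d S l x then 1 else 0) :=
        Finset.sum_congr rfl (fun x _ => by rw [hidl x])

end Part2

/-- There is a leaf-last non-adaptive strategy `S` minimizing, among all non-adaptive
strategies, the conditional expected leaf cost given that at least one leaf is alive;
and for any such `S` and every `ℓ ∈ {1, …, L-1}` (where `L = 2^d` is the number of
leaves), the conditional probability that `S` first finds an alive leaf on its `ℓ`-th
leaf test is at least the conditional probability that it first finds an alive leaf on
its `(ℓ+1)`-st leaf test. -/
theorem stmt8 (ε : ℝ) (hε0 : 0 < ε) (hε1 : ε ≤ 1/2) (d : ℕ) (hd : 1 ≤ d) :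
    (∃ S : Equiv.Perm (Fin (2 ^ (d + 1) - 2)), IsLeafLast d S ∧
        ∀ π : Equiv.Perm (Fin (2 ^ (d + 1) - 2)),
          condExpLeafCost d ε S ≤ condExpLeafCost d ε π) ∧
    ∀ S : Equiv.Perm (Fin (2 ^ (d + 1) - 2)), IsLeafLast d S →
      (∀ π : Equiv.Perm (Fin (2 ^ (d + 1) - 2)),
          condExpLeafCost d ε S ≤ condExpLeafCost d ε π) →
      ∀ l : ℕ, 1 ≤ l → l ≤ 2 ^ d - 1 →
        condProbFirstAliveAt d ε S (l + 1) ≤ condProbFirstAliveAt d ε S l := by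
  exact ⟨exists_opt_leafLast hε0 hε1 hd,
    fun S hLL hopt l hl1 hl2 => prob_mono hε0 hε1 hd S hLL hopt l hl1 hl2⟩
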